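/- There exists a continuous linear operator U on the real Banach space ℓ₁ with operator norm at most 1 such that for every separable real Banach space E and every continuous linear operator f : E → E with operator norm at most 1, there exists a surjective continuous linear operator q : ℓ₁ → E with operator norm at most 1 satisfying f ∘ q = q ∘ U. -/

import Mathlib

open TopologicalSpace

/-- `ℓ₁` : the real Banach space of summable sequences. -/
noncomputable abbrev ellOne : Type := lp (fun _ : ℕ => ℝ) 1

open ENNReal
set_option linter.unusedSectionVars false

noncomputable def pe : ℕ ≃ ℕ × ℕ := (Denumerable.eqv (ℕ × ℕ)).symm

noncomputable def sfn (m : ℕ) : ℕ := pe.symm ((pe m).1, (pe m).2 + 1)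

lemma sfn_inj : Function.Injective sfn := by
  intro a b h
  have h' := pe.symm.injective h
  have : pe a = pe b := by
    have h1 := congrArg Prod.fst h'
    have h2 := congrArg Prod.snd h'
    simp only at h1 h2
    exact Prod.ext h1 (by omega)
  exact pe.injective this

noncomputable def Ufun (a : ℕ → ℝ) (k : ℕ) : ℝ :=
  if (pe k).2 = 0 then 0 else a (pe.symm ((pe k).1, (pe k).2 - 1))

lemma Ufun_sfn (a : ℕ → ℝ) (m : ℕ) : Ufun a (sfn m) = a m := by
  simp [Ufun, sfn]

lemma Ufun_not_range (a : ℕ → ℝ) {k : ℕ} (h : k ∉ Set.range sfn) : Ufun a k = 0 := by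
  rw [Ufun]
  split
  · rfl
  · rename_i h0
    exfalso
    apply h
    refine ⟨pe.symm ((pe k).1, (pe k).2 - 1), ?_⟩
    rw [sfn]
    rw [Equiv.apply_symm_apply]
    simp only [Nat.sub_add_cancel (Nat.one_le_iff_ne_zero.2 h0)]
    exact pe.symm_apply_apply k

lemma toReal_one_pos : 0 < (1 : ℝ≥0∞).toReal := by simp

lemma lp_hasSum_norm' (a : lp (fun _ : ℕ => ℝ) 1) : HasSum (fun i => ‖a i‖) ‖a‖ := by
  have := lp.hasSum_norm toReal_one_pos a
  simpa using this

lemma hasSum_check (a : lp (fun _ : ℕ => ℝ) 1) (g : ℕ → ℕ) (hg : Function.Injective g)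
    (F : ℕ → ℝ) (h0 : ∀ k ∉ Set.range g, F k = 0) (hFg : ∀ m, F (g m) = ‖a m‖) :
    HasSum F ‖a‖ := by
  rw [← hg.hasSum_iff (f := F) (a := ‖a‖) (by intro x hx; exact h0 x hx)]
  have h := lp_hasSum_norm' a
  apply HasSum.congr_fun h
  intro m
  exact hFg m

lemma Ufun_hasSum (a : ellOne) : HasSum (fun k => ‖Ufun (⇑a) k‖) ‖a‖ :=
  hasSum_check a sfn sfn_inj _
    (fun k hk => by rw [Ufun_not_range _ hk]; simp)
    (fun m => by rw [Ufun_sfn])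

lemma Ufun_mem (a : ellOne) : Memℓp (Ufun ⇑a) 1 :=
  memℓp_gen (by simpa using (Ufun_hasSum a).summable)

noncomputable def Ulin : ellOne →ₗ[ℝ] ellOne where
  toFun a := ⟨Ufun ⇑a, Ufun_mem a⟩
  map_add' a b := by
    ext k
    simp only [lp.coeFn_add, Pi.add_apply]
    show Ufun (⇑a + ⇑b) k = Ufun ⇑a k + Ufun ⇑b k
    unfold Ufun
    split <;> simp
  map_smul' c a := by
    ext k
    simp only [lp.coeFn_smul, Pi.smul_apply, RingHom.id_apply]
    show Ufun (c • ⇑a) k = c • Ufun ⇑a k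
    unfold Ufun
    split <;> simp

lemma Ulin_norm (a : ellOne) : ‖Ulin a‖ = ‖a‖ := by
  have h1 : HasSum (fun k => ‖(Ulin a) k‖) ‖Ulin a‖ := lp_hasSum_norm' (Ulin a)
  have h2 : HasSum (fun k => ‖(Ulin a) k‖) ‖a‖ := by
    have : ⇑(Ulin a) = Ufun ⇑a := rfl
    rw [this]; exact Ufun_hasSum a
  exact h1.unique h2

noncomputable def Uop : ellOne →L[ℝ] ellOne :=
  Ulin.mkContinuous 1 (fun a => by rw [Ulin_norm]; simp)

lemma Uop_norm : ‖Uop‖ ≤ 1 := Ulin.mkContinuous_norm_le zero_le_one _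

lemma Uop_coe (a : ellOne) : ⇑(Uop a) = Ufun ⇑a := rfl

section Q
variable {E : Type} [NormedAddCommGroup E] [NormedSpace ℝ E] [CompleteSpace E]

lemma Qnormsummable (v : ℕ → E) (hv : ∀ i, ‖v i‖ ≤ 1) (a : ellOne) :
    Summable (fun i => ‖a i • v i‖) := by
  apply Summable.of_nonneg_of_le (fun i => norm_nonneg _) (fun i => ?_)
    (lp_hasSum_norm' a).summable
  rw [norm_smul]
  calc ‖a i‖ * ‖v i‖ ≤ ‖a i‖ * 1 :=
        mul_le_mul_of_nonneg_left (hv i) (norm_nonneg _)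
    _ = ‖a i‖ := mul_one _

lemma Qsummable (v : ℕ → E) (hv : ∀ i, ‖v i‖ ≤ 1) (a : ellOne) :
    Summable (fun i => a i • v i) :=
  (Qnormsummable v hv a).of_norm

noncomputable def Qlin (v : ℕ → E) (hv : ∀ i, ‖v i‖ ≤ 1) : ellOne →ₗ[ℝ] E where
  toFun a := ∑' i, a i • v i
  map_add' a b := by
    rw [← Summable.tsum_add (Qsummable v hv a) (Qsummable v hv b)]
    apply tsum_congr
    intro i
    rw [lp.coeFn_add, Pi.add_apply, add_smul]
  map_smul' c a := by
    simp only [RingHom.id_apply]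
    rw [← Summable.tsum_const_smul c (Qsummable v hv a)]
    apply tsum_congr
    intro i
    rw [lp.coeFn_smul, Pi.smul_apply, smul_smul, smul_eq_mul]

lemma Qlin_norm (v : ℕ → E) (hv : ∀ i, ‖v i‖ ≤ 1) (a : ellOne) :
    ‖Qlin v hv a‖ ≤ ‖a‖ := by
  calc ‖Qlin v hv a‖ ≤ ∑' i, ‖a i • v i‖ :=
        norm_tsum_le_tsum_norm (Qnormsummable v hv a)
    _ ≤ ∑' i, ‖a i‖ := by
        apply Summable.tsum_le_tsum _ (Qnormsummable v hv a) (lp_hasSum_norm' a).summable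
        intro i
        rw [norm_smul]
        calc ‖a i‖ * ‖v i‖ ≤ ‖a i‖ * 1 :=
              mul_le_mul_of_nonneg_left (hv i) (norm_nonneg _)
          _ = ‖a i‖ := mul_one _
    _ = ‖a‖ := (lp_hasSum_norm' a).tsum_eq

noncomputable def Qop (v : ℕ → E) (hv : ∀ i, ‖v i‖ ≤ 1) : ellOne →L[ℝ] E :=
  (Qlin v hv).mkContinuous 1 (fun a => by rw [one_mul]; exact Qlin_norm v hv a)

lemma Qop_apply (v : ℕ → E) (hv : ∀ i, ‖v i‖ ≤ 1) (a : ellOne) :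
    Qop v hv a = ∑' i, a i • v i := rfl

lemma Qop_norm (v : ℕ → E) (hv : ∀ i, ‖v i‖ ≤ 1) : ‖Qop v hv‖ ≤ 1 :=
  (Qlin v hv).mkContinuous_norm_le zero_le_one _

lemma Qop_single (v : ℕ → E) (hv : ∀ i, ‖v i‖ ≤ 1) (i : ℕ) (r : ℝ) :
    Qop v hv (lp.single 1 i r) = r • v i := by
  rw [Qop_apply]
  rw [tsum_eq_single i]
  · rw [lp.single_apply_self]
  · intro j hj
    rw [lp.single_apply_ne 1 i _ hj, zero_smul]

end Q

section comm
variable {E : Type} [NormedAddCommGroup E] [NormedSpace ℝ E] [CompleteSpace E]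

lemma commute_key (v : ℕ → E) (hv : ∀ i, ‖v i‖ ≤ 1) (f : E →L[ℝ] E)
    (hvf : ∀ m, v (sfn m) = f (v m)) (a : ellOne) :
    f (Qop v hv a) = Qop v hv (Uop a) := by
  rw [Qop_apply, Qop_apply, f.map_tsum (Qsummable v hv a)]
  have hsupp : (Function.support fun k => (Uop a) k • v k) ⊆ Set.range sfn := by
    intro k hk
    by_contra hr
    apply hk
    have : (Uop a) k = 0 := by rw [Uop_coe]; exact Ufun_not_range _ hr
    show (Uop a) k • v k = 0
    rw [this, zero_smul]
  rw [← sfn_inj.tsum_eq hsupp]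
  apply tsum_congr
  intro m
  have h1 : (Uop a) (sfn m) = a m := by rw [Uop_coe]; exact Ufun_sfn _ m
  rw [h1, hvf m, f.map_smul]
end comm
section W
variable {E : Type} [NormedAddCommGroup E] [NormedSpace ℝ E]

noncomputable def Wseq (x : ℕ → E)
    (step : ∀ z : E, ‖z‖ < 2⁻¹ → ∃ n, ‖(2:ℝ) • z - x n‖ < 4⁻¹)
    (w0 : {z : E // ‖z‖ < 2⁻¹}) : ℕ → {z : E // ‖z‖ < 2⁻¹}
  | 0 => w0
  | (k+1) =>
    let z := Wseq x step w0 k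
    ⟨(2:ℝ) • z.1 - x (Classical.choose (step z.1 z.2)),
      lt_trans (Classical.choose_spec (step z.1 z.2)) (by norm_num)⟩

lemma Wseq_succ (x : ℕ → E)
    (step : ∀ z : E, ‖z‖ < 2⁻¹ → ∃ n, ‖(2:ℝ) • z - x n‖ < 4⁻¹)
    (w0 : {z : E // ‖z‖ < 2⁻¹}) (k : ℕ) :
    (Wseq x step w0 (k+1)).1 =
      (2:ℝ) • (Wseq x step w0 k).1 -
        x (Classical.choose (step (Wseq x step w0 k).1 (Wseq x step w0 k).2)) := rfl

lemma Wseq_invariant (x : ℕ → E)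
    (step : ∀ z : E, ‖z‖ < 2⁻¹ → ∃ n, ‖(2:ℝ) • z - x n‖ < 4⁻¹)
    (w0 : {z : E // ‖z‖ < 2⁻¹}) (k : ℕ) :
    w0.1 = (∑ i ∈ Finset.range k,
        ((2:ℝ)^(i+1))⁻¹ • x (Classical.choose (step (Wseq x step w0 i).1 (Wseq x step w0 i).2)))
      + ((2:ℝ)^k)⁻¹ • (Wseq x step w0 k).1 := by
  induction k with
  | zero => simp [Wseq]
  | succ k ih =>
    rw [Finset.sum_range_succ, ih, Wseq_succ]
    match_scalars <;> (field_simp; try ring)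
end W
section surj
variable {E : Type} [NormedAddCommGroup E] [NormedSpace ℝ E] [CompleteSpace E]

lemma Qop_surjective (v : ℕ → E) (hv : ∀ i, ‖v i‖ ≤ 1) (x : ℕ → E) (t : ℕ → ℕ)
    (hvt : ∀ n, v (t n) = x n)
    (dens : ∀ z : E, ‖z‖ < 1 → ∀ ε > 0, ∃ n, ‖z - x n‖ < ε) :
    Function.Surjective (Qop v hv) := by
  have hxnorm : ∀ n, ‖x n‖ ≤ 1 := fun n => hvt n ▸ hv (t n)
  intro y
  by_cases hy : y = 0
  · exact ⟨0, by rw [map_zero, hy]⟩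
  have hcy : (0:ℝ) < ‖y‖ := norm_pos_iff.2 hy
  set c : ℝ := 3 * ‖y‖ with hc
  have hc0 : 0 < c := by positivity
  have hw0 : ‖c⁻¹ • y‖ < 2⁻¹ := by
    rw [norm_smul, norm_inv, Real.norm_eq_abs, abs_of_pos hc0, hc]
    rw [show (3 * ‖y‖)⁻¹ * ‖y‖ = 3⁻¹ * (‖y‖⁻¹ * ‖y‖) by rw [mul_inv]; ring,
      inv_mul_cancel₀ hcy.ne', mul_one]
    norm_num
  have step : ∀ z : E, ‖z‖ < 2⁻¹ → ∃ n, ‖(2:ℝ) • z - x n‖ < 4⁻¹ := by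
    intro z hz
    have h2z : ‖(2:ℝ) • z‖ < 1 := by
      rw [norm_smul]; simp only [Real.norm_ofNat]
      nlinarith
    obtain ⟨n, hn⟩ := dens ((2:ℝ) • z) h2z 4⁻¹ (by norm_num)
    exact ⟨n, hn⟩
  set W := Wseq x step ⟨c⁻¹ • y, hw0⟩ with hW
  set nn : ℕ → ℕ := fun k => Classical.choose (step (W k).1 (W k).2) with hnn
  set g : ℕ → E := fun k => ((2:ℝ)^(k+1))⁻¹ • x (nn k) with hg
  have hgs : Summable g := by
    apply Summable.of_norm
    apply Summable.of_nonneg_of_le (fun k => norm_nonneg _) (fun k => ?_)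
      (summable_geometric_two.comp_injective (add_left_injective 1))
    rw [hg]
    simp only [Function.comp_apply, norm_smul, norm_inv, norm_pow, Real.norm_ofNat]
    calc ((2:ℝ)^(k+1))⁻¹ * ‖x (nn k)‖ ≤ ((2:ℝ)^(k+1))⁻¹ * 1 := by
          apply mul_le_mul_of_nonneg_left (hxnorm _) (by positivity)
      _ = (1/2:ℝ)^(k+1) := by rw [mul_one, one_div, inv_pow]
  have hinv : ∀ k, c⁻¹ • y = (∑ i ∈ Finset.range k, g i) + ((2:ℝ)^k)⁻¹ • (W k).1 :=
    fun k => Wseq_invariant x step ⟨c⁻¹ • y, hw0⟩ k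
  have htend : Filter.Tendsto (fun k => ∑ i ∈ Finset.range k, g i)
      Filter.atTop (nhds (c⁻¹ • y)) := by
    rw [← tendsto_sub_nhds_zero_iff]
    have hlim : Filter.Tendsto (fun k : ℕ => (2⁻¹:ℝ)^k * 2⁻¹) Filter.atTop (nhds 0) := by
      have : Filter.Tendsto (fun k : ℕ => (2⁻¹:ℝ)^k * 2⁻¹) Filter.atTop (nhds (0 * 2⁻¹)) :=
        (_root_.tendsto_pow_atTop_nhds_zero_of_lt_one (by norm_num : (0:ℝ) ≤ 2⁻¹) (by norm_num)).mul_const _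
      simpa using this
    apply squeeze_zero_norm _ hlim
    intro k
    · have := hinv k
      have heq : (∑ i ∈ Finset.range k, g i) - c⁻¹ • y = -(((2:ℝ)^k)⁻¹ • (W k).1) := by
        rw [this]; abel
      rw [heq, norm_neg, norm_smul, norm_inv, norm_pow, Real.norm_ofNat, inv_pow]
      exact mul_le_mul_of_nonneg_left (le_of_lt (W k).2) (by positivity)
  have hsum : HasSum g (c⁻¹ • y) := by
    have h1 := hgs.hasSum
    have h2 := h1.tendsto_sum_nat
    rwa [tendsto_nhds_unique h2 htend] at h1
  -- construct the preimage
  set A : ℕ → ellOne := fun k => lp.single 1 (t (nn k)) (c * ((2:ℝ)^(k+1))⁻¹) with hA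
  have hAnorm : ∀ k, ‖A k‖ = c * ((2:ℝ)^(k+1))⁻¹ := by
    intro k
    rw [hA]
    have := lp.norm_single (E := fun _ : ℕ => ℝ) (zero_lt_one' ℝ≥0∞)
      (t (nn k)) (c * ((2:ℝ)^(k+1))⁻¹)
    rw [this, Real.norm_eq_abs, abs_of_pos (by positivity)]
  have hAs : Summable A := by
    apply Summable.of_norm
    have : Summable (fun k : ℕ => c * ((1/2:ℝ)^(k+1))) :=
      (summable_geometric_two.comp_injective (add_left_injective 1)).mul_left c
    apply this.congr
    intro k
    rw [hAnorm k]
    simp [one_div, inv_pow]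
  refine ⟨∑' k, A k, ?_⟩
  rw [(Qop v hv).map_tsum hAs]
  have : ∀ k, Qop v hv (A k) = c • g k := by
    intro k
    rw [hA]
    simp only
    rw [Qop_single, hvt, hg]
    simp only
    rw [smul_smul]
  rw [tsum_congr this, Summable.tsum_const_smul c hgs, hsum.tsum_eq, smul_inv_smul₀ hc0.ne']
end surj

lemma pow_apply_norm_le {E : Type} [NormedAddCommGroup E] [NormedSpace ℝ E]
    (f : E →L[ℝ] E) (hf : ‖f‖ ≤ 1) (j : ℕ) (z : E) (hz : ‖z‖ ≤ 1) :
    ‖(f ^ j) z‖ ≤ 1 := by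
  induction j with
  | zero => simpa using hz
  | succ j ih =>
    rw [pow_succ', ContinuousLinearMap.mul_apply]
    calc ‖f ((f ^ j) z)‖ ≤ ‖f‖ * ‖(f ^ j) z‖ := f.le_opNorm _
      _ ≤ 1 * 1 := mul_le_mul hf ih (norm_nonneg _) zero_le_one
      _ = 1 := one_mul 1


/-- There exists a nonexpansive continuous linear operator `U` on `ℓ₁` such that every
nonexpansive continuous linear operator `f` on a separable real Banach space `E` lifts to
`U` via a surjective nonexpansive continuous linear operator `q : ℓ₁ → E`. -/
theorem exists_surjectively_universal_operator :
    ∃ U : ellOne →L[ℝ] ellOne, ‖U‖ ≤ 1 ∧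
      ∀ (E : Type) [NormedAddCommGroup E] [NormedSpace ℝ E] [CompleteSpace E]
        [SeparableSpace E] (f : E →L[ℝ] E), ‖f‖ ≤ 1 →
        ∃ q : ellOne →L[ℝ] E, Function.Surjective q ∧ ‖q‖ ≤ 1 ∧
          ∀ x : ellOne, f (q x) = q (U x) := by
  refine ⟨Uop, Uop_norm, ?_⟩
  intro E _ _ _ _ f hf
  haveI : Nonempty E := ⟨0⟩
  obtain ⟨d, hd⟩ := exists_dense_seq E
  set x : ℕ → E := fun n => if ‖d n‖ ≤ 1 then d n else 0 with hxdef
  have hx : ∀ n, ‖x n‖ ≤ 1 := by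
    intro n
    rw [hxdef]
    by_cases h : ‖d n‖ ≤ 1 <;> simp [h]
  have dens : ∀ z : E, ‖z‖ < 1 → ∀ ε > 0, ∃ n, ‖z - x n‖ < ε := by
    intro z hz ε hε
    obtain ⟨n, hn⟩ := Metric.denseRange_iff.1 hd z (min ε (1 - ‖z‖))
      (lt_min hε (by linarith))
    rw [dist_eq_norm] at hn
    have hdn : ‖d n‖ ≤ 1 := by
      calc ‖d n‖ = ‖z - (z - d n)‖ := by congr 1; abel
        _ ≤ ‖z‖ + ‖z - d n‖ := norm_sub_le _ _
        _ ≤ ‖z‖ + (1 - ‖z‖) := by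
            have := lt_of_lt_of_le hn (min_le_right _ _)
            linarith
        _ = 1 := by ring
    refine ⟨n, ?_⟩
    rw [hxdef]
    simp only [hdn, if_pos]
    exact lt_of_lt_of_le hn (min_le_left _ _)
  set v : ℕ → E := fun k => (f ^ (pe k).2) (x (pe k).1) with hvdef
  have hvnorm : ∀ k, ‖v k‖ ≤ 1 := fun k => pow_apply_norm_le f hf _ _ (hx _)
  have hvt : ∀ n, v (pe.symm (n, 0)) = x n := by
    intro n
    rw [hvdef]
    simp only [Equiv.apply_symm_apply, pow_zero, ContinuousLinearMap.one_apply]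
  have hvf : ∀ m, v (sfn m) = f (v m) := by
    intro m
    rw [hvdef]
    simp only [sfn, Equiv.apply_symm_apply, pow_succ', ContinuousLinearMap.mul_apply]
  exact ⟨Qop v hvnorm,
    Qop_surjective v hvnorm x (fun n => pe.symm (n, 0)) hvt dens,
    Qop_norm v hvnorm,
    fun a => commute_key v hvnorm f hvf a⟩
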